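/- Let T be a bounded linear operator on L²(G, ℂ^{s×r}) that is adjointable with respect to the matrix-valued inner product, with T + T* ≠ 0 and T − T* ≠ 0, and let {E_k}_{k∈ℕ} be a matrix-valued orthonormal basis for L²(G, ℂ^{s×r}). Let Q₁ be the positive square root of ‖T+T*‖²I − (T+T*)² (a bounded positive operator with Q₁² = ‖T+T*‖²I − (T+T*)²) and Q₂ the positive square root of ‖T−T*‖²I + (T−T*)² (a bounded positive operator with Q₂² = ‖T−T*‖²I + (T−T*)²). Define Ω₁ = (1/‖T+T*‖)(T + T* + iQ₁), Ω₂ = (1/‖T+T*‖)(T + T* − iQ₁), Ω₃ = (−i/‖T−T*‖)(T − T* − Q₂), and Ω₄ = (−i/‖T−T*‖)(T − T* + Q₂). Then for each i ∈ {1, 2, 3, 4}, the sequence {Ω_i E_k}_{k∈ℕ} is a matrix-valued Riesz basis for L²(G, ℂ^{s×r}). -/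

import Mathlib

open MeasureTheory Filter
open scoped ENNReal ComplexOrder

noncomputable section

/-- The space `L²(G, ℂ^{s×r})` of square-integrable `ℂ^{s×r}`-valued functions on `G`,
realized as an `Lp`-space with values in `EuclideanSpace ℂ (Fin s × Fin r)`
(so that the norm is the Frobenius norm). -/
abbrev MatL2 {G : Type*} [MeasurableSpace G] (μ : Measure G) (s r : ℕ) : Type _ :=
  Lp (α := G) (EuclideanSpace ℂ (Fin s × Fin r)) 2 μ

/-- The matrix-valued inner product `⟨f, g⟩ = ∫_G f(x) g(x)* dμ(x)`, an `s × s` matrix. -/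
def matInner {G : Type*} [MeasurableSpace G] {μ : Measure G} {s r : ℕ}
    (f g : MatL2 μ s r) : Matrix (Fin s) (Fin s) ℂ :=
  Matrix.of fun i j => ∫ x, ∑ n : Fin r, f x (i, n) * (starRingEnd ℂ) (g x (j, n)) ∂μ

/-- Left multiplication by the matrix `A : ℂ^{s×s}` as a continuous linear map on
`ℂ^{s×r} ≅ EuclideanSpace ℂ (Fin s × Fin r)`; it is given by the matrix `A ⊗ I`. -/
def matMulCLM (s r : ℕ) (A : Matrix (Fin s) (Fin s) ℂ) :
    EuclideanSpace ℂ (Fin s × Fin r) →L[ℂ] EuclideanSpace ℂ (Fin s × Fin r) :=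
  LinearMap.toContinuousLinearMap
    (Matrix.toEuclideanLin (Matrix.of fun p q : Fin s × Fin r =>
      if p.2 = q.2 then A p.1 q.1 else 0))

/-- The action of a matrix `A : ℂ^{s×s}` on `h ∈ L²(G, ℂ^{s×r})` by pointwise left
multiplication, `(A h)(x) = A · h(x)`. -/
def matSMul {G : Type*} [MeasurableSpace G] {μ : Measure G} {s r : ℕ}
    (A : Matrix (Fin s) (Fin s) ℂ) (f : MatL2 μ s r) : MatL2 μ s r :=
  (matMulCLM s r A).compLp f

/-- A bounded linear operator `U` on `L²(G, ℂ^{s×r})` is adjointable with respect to the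
matrix-valued inner product if `⟨U f, g⟩ = ⟨f, U* g⟩` (as `s × s` matrices) for all `f, g`,
where `U*` is the Hilbert adjoint of `U`. -/
def MatAdjointable {G : Type*} [MeasurableSpace G] {μ : Measure G} {s r : ℕ}
    (U : MatL2 μ s r →L[ℂ] MatL2 μ s r) : Prop :=
  ∀ f g : MatL2 μ s r,
    matInner (U f) g = matInner f (ContinuousLinearMap.adjoint U g)

/-- A matrix-valued orthonormal basis of `L²(G, ℂ^{s×r})`: `⟨E k, E j⟩ = δ_{kj} I` and
every `f` has the expansion `f = ∑_k ⟨f, E k⟩ E k`, the series converging in norm. -/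
def IsMatONB {G : Type*} [MeasurableSpace G] {μ : Measure G} {s r : ℕ}
    (E : ℕ → MatL2 μ s r) : Prop :=
  (∀ k j : ℕ, matInner (E k) (E j) =
      if k = j then (1 : Matrix (Fin s) (Fin s) ℂ) else (0 : Matrix (Fin s) (Fin s) ℂ)) ∧
  (∀ f : MatL2 μ s r,
    Tendsto (fun N : ℕ => ∑ k ∈ Finset.range N, matSMul (matInner f (E k)) (E k))
      atTop (nhds f))

/-- A matrix-valued Riesz basis of `L²(G, ℂ^{s×r})`: the image of a matrix-valued
orthonormal basis under a bounded, linear, bijective operator that is adjointable with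
respect to the matrix-valued inner product. -/
def IsMatRieszBasis {G : Type*} [MeasurableSpace G] {μ : Measure G} {s r : ℕ}
    (F : ℕ → MatL2 μ s r) : Prop :=
  ∃ (E : ℕ → MatL2 μ s r) (V : MatL2 μ s r →L[ℂ] MatL2 μ s r),
    IsMatONB E ∧ Function.Bijective V ∧ MatAdjointable V ∧ ∀ k : ℕ, F k = V (E k)

/-- The Frobenius norm of an `s × s` complex matrix. -/
def frobNorm {s : ℕ} (A : Matrix (Fin s) (Fin s) ℂ) : ℝ :=
  Real.sqrt (∑ i : Fin s, ∑ j : Fin s, ‖A i j‖ ^ 2)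

end

set_option maxHeartbeats 1000000
set_option synthInstance.maxHeartbeats 1000000

noncomputable section AuxProof
open ContinuousLinearMap
open scoped InnerProductSpace

variable {G : Type*} [MeasurableSpace G] {μ : Measure G} {s r : ℕ}

lemma matMulCLM_apply' (A : Matrix (Fin s) (Fin s) ℂ) (u : EuclideanSpace ℂ (Fin s × Fin r))
    (p : Fin s × Fin r) : matMulCLM s r A u p = ∑ q : Fin s, A p.1 q * u (q, p.2) := by
  simp only [matMulCLM, LinearMap.coe_toContinuousLinearMap', Matrix.toEuclideanLin_apply]
  show ∑ q : Fin s × Fin r, (if p.2 = q.2 then A p.1 q.1 else 0) * u q = _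
  rw [Fintype.sum_prod_type]
  simp [Finset.sum_ite_eq, eq_comm, mul_comm]

def opM (μ : Measure G) (s r : ℕ) (i j : Fin s) : MatL2 μ s r →L[ℂ] MatL2 μ s r :=
  (matMulCLM s r (Matrix.single i j 1)).compLpL 2 μ

lemma matMulCLM_std_apply (i j : Fin s) (u : EuclideanSpace ℂ (Fin s × Fin r))
    (p : Fin s × Fin r) :
    matMulCLM s r (Matrix.single i j 1) u p = if p.1 = i then u (j, p.2) else 0 := by
  rw [matMulCLM_apply']
  simp [Matrix.single, ite_and, eq_comm]

lemma inner_opM_left (i j : Fin s) (g f : MatL2 μ s r) :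
    ⟪opM μ s r i j g, f⟫_ℂ = ∫ x, ∑ n : Fin r, (starRingEnd ℂ) (g x (j, n)) * f x (i, n) ∂μ := by
  rw [L2.inner_def]
  refine integral_congr_ae ?_
  filter_upwards [ContinuousLinearMap.coeFn_compLpL (p := 2) (μ := μ)
    (matMulCLM s r (Matrix.single i j 1)) g] with x hx
  show ⟪(opM μ s r i j g : MatL2 μ s r) x, f x⟫_ℂ = _
  rw [show ((opM μ s r i j g : MatL2 μ s r) : G → EuclideanSpace ℂ (Fin s × Fin r)) x
      = matMulCLM s r (Matrix.single i j 1) (g x) from hx]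
  rw [PiLp.inner_apply, Fintype.sum_prod_type]
  simp [matMulCLM_std_apply, RCLike.inner_apply, Finset.sum_ite_eq, apply_ite]
  exact Finset.sum_congr rfl fun n _ => mul_comm _ _

lemma matInner_eq (f g : MatL2 μ s r) :
    matInner f g = Matrix.of fun i j => ⟪opM μ s r i j g, f⟫_ℂ := by
  ext i j
  rw [Matrix.of_apply, inner_opM_left]
  show (∫ x, ∑ n : Fin r, f x (i, n) * (starRingEnd ℂ) (g x (j, n)) ∂μ) = _
  congr 1; funext x; exact Finset.sum_congr rfl fun n _ => mul_comm _ _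

lemma opM_adjoint (i j : Fin s) :
    ContinuousLinearMap.adjoint (opM (G := G) μ s r i j) = opM μ s r j i := by
  symm
  rw [ContinuousLinearMap.eq_adjoint_iff]
  intro x y
  rw [inner_opM_left, ← inner_conj_symm x, inner_opM_left, ← integral_conj]
  congr 1; funext a
  rw [map_sum]
  exact Finset.sum_congr rfl fun n _ => by simp [mul_comm]

lemma opM_star (i j : Fin s) :
    star (opM (G := G) μ s r i j) = opM μ s r j i := by
  rw [ContinuousLinearMap.star_eq_adjoint, opM_adjoint]

variable {U : MatL2 μ s r →L[ℂ] MatL2 μ s r}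

lemma matAdjointable_iff' (U : MatL2 μ s r →L[ℂ] MatL2 μ s r) :
    MatAdjointable U ↔
      ∀ i j, Commute (opM μ s r i j) (ContinuousLinearMap.adjoint U) := by
  constructor
  · intro h i j
    have key : ∀ g, ContinuousLinearMap.adjoint U (opM μ s r i j g)
        = opM μ s r i j (ContinuousLinearMap.adjoint U g) := by
      intro g
      apply ext_inner_right ℂ
      intro f
      have h1 := congrFun (congrFun (h f g) i) j
      rw [matInner_eq, matInner_eq] at h1
      simpa [ContinuousLinearMap.adjoint_inner_left] using h1
    ext g
    simp [ContinuousLinearMap.mul_apply, key g]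
  · intro h f g
    rw [matInner_eq, matInner_eq]
    ext i j
    simp only [Matrix.of_apply]
    rw [← ContinuousLinearMap.adjoint_inner_left]
    have : ContinuousLinearMap.adjoint U (opM μ s r i j g)
        = opM μ s r i j (ContinuousLinearMap.adjoint U g) := by
      have h2 := (h i j).symm
      calc ContinuousLinearMap.adjoint U (opM μ s r i j g)
          = (ContinuousLinearMap.adjoint U * opM μ s r i j) g := rfl
        _ = (opM μ s r i j * ContinuousLinearMap.adjoint U) g := by rw [h2]
        _ = _ := rfl
    rw [this]

lemma comm_star' (h : ∀ i j, Commute (opM μ s r i j) U) :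
    ∀ i j, Commute (opM μ s r i j) (star U) := fun i j => by
  have h2 := (h j i).star_star
  rwa [opM_star] at h2

lemma matAdjointable_of_comm (h : ∀ i j, Commute (opM μ s r i j) U) :
    MatAdjointable U :=
  (matAdjointable_iff' U).2 (by
    have := comm_star' h
    simpa [ContinuousLinearMap.star_eq_adjoint] using this)

lemma comm_of_matAdjointable (h : MatAdjointable U) :
    ∀ i j, Commute (opM μ s r i j) U := by
  have h2 := (matAdjointable_iff' U).1 h
  have h3 := comm_star' h2
  simpa [ContinuousLinearMap.star_eq_adjoint, ContinuousLinearMap.adjoint_adjoint] using h3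

section Hilbert
variable {H : Type*} [NormedAddCommGroup H] [InnerProductSpace ℂ H] [CompleteSpace H]

/-- The commutant-type star subalgebra of elements commuting with `b` and `star b`. -/
def commSubalg (b : H →L[ℂ] H) : StarSubalgebra ℂ (H →L[ℂ] H) where
  carrier := {x | Commute b x ∧ Commute (star b) x}
  mul_mem' := fun hx hy => ⟨hx.1.mul_right hy.1, hx.2.mul_right hy.2⟩
  one_mem' := ⟨Commute.one_right _, Commute.one_right _⟩
  add_mem' := fun hx hy => ⟨hx.1.add_right hy.1, hx.2.add_right hy.2⟩
  zero_mem' := ⟨Commute.zero_right _, Commute.zero_right _⟩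
  algebraMap_mem' := fun c => ⟨(Algebra.commutes c b).symm, (Algebra.commutes c (star b)).symm⟩
  star_mem' := fun {x} hx => ⟨by simpa using hx.2.star_star, by simpa using hx.1.star_star⟩

lemma isClosed_commSubalg (b : H →L[ℂ] H) : IsClosed ((commSubalg b : Set (H →L[ℂ] H))) := by
  have h1 : IsClosed {x : H →L[ℂ] H | Commute b x} :=
    isClosed_eq (continuous_const.mul continuous_id) (continuous_id.mul continuous_const)
  have h2 : IsClosed {x : H →L[ℂ] H | Commute (star b) x} :=
    isClosed_eq (continuous_const.mul continuous_id) (continuous_id.mul continuous_const)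
  exact h1.inter h2

lemma cfc_mem_elemental' (a : H →L[ℂ] H) (ha : IsStarNormal a) (f : ℂ → ℂ) :
    cfc f a ∈ StarAlgebra.elemental ℂ a := by
  by_cases hf : ContinuousOn f (spectrum ℂ a)
  · rw [cfc_apply f a ha hf, cfcHom_eq_of_isStarNormal]
    exact Subtype.coe_prop _
  · rw [cfc_apply_of_not_continuousOn a hf]; exact zero_mem _

lemma commute_sqrt {a b : H →L[ℂ] H} (ha : (0 : H →L[ℂ] H) ≤ a)
    (hb : Commute b a) (hb' : Commute (star b) a) : Commute b (CFC.sqrt a) := by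
  have hsa : IsSelfAdjoint a := IsSelfAdjoint.of_nonneg ha
  rw [CFC.sqrt_eq_cfc, cfc_nnreal_eq_real _ _ ha, cfc_real_eq_complex _ hsa]
  have hmem := cfc_mem_elemental' a hsa.isStarNormal
    (fun x : ℂ => ((NNReal.sqrt (Real.toNNReal x.re) : ℝ) : ℂ))
  have hle := StarAlgebra.elemental.le_of_mem (isClosed_commSubalg b) (⟨hb, hb'⟩ :
    a ∈ commSubalg b)
  exact (hle hmem).1

lemma commute_of_sq {a b Q : H →L[ℂ] H} (ha : (0 : H →L[ℂ] H) ≤ a)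
    (hQ : (0 : H →L[ℂ] H) ≤ Q) (hQa : Q * Q = a)
    (hb : Commute b a) (hb' : Commute (star b) a) : Commute b Q := by
  have := commute_sqrt ha hb hb'
  rwa [← hQa, ← pow_two, CFC.sqrt_sq Q hQ] at this

variable {R : Type*} [Ring R] [Algebra ℂ R]

lemma expand_e1 {A Q : R} (h : Commute A Q) :
    (A - Complex.I • Q) * (A + Complex.I • Q) = A * A + Q * Q := by
  simp only [mul_add, add_mul, sub_mul, mul_sub, smul_mul_assoc, mul_smul_comm, smul_smul,
    Complex.I_mul_I, neg_smul, one_smul, h.eq]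
  match_scalars <;> simp [Complex.I_sq]

lemma expand_e2 {A Q : R} (h : Commute A Q) :
    (A + Complex.I • Q) * (A - Complex.I • Q) = A * A + Q * Q := by
  simp only [mul_add, add_mul, sub_mul, mul_sub, smul_mul_assoc, mul_smul_comm, smul_smul,
    Complex.I_mul_I, neg_smul, one_smul, h.eq]
  match_scalars <;> simp [Complex.I_sq]

lemma expand_e3 {B Q : R} (h : Commute B Q) :
    (B + Q) * (B - Q) = B * B - Q * Q := by
  simp only [mul_add, add_mul, sub_mul, mul_sub, h.eq]
  abel

lemma expand_e4 {B Q : R} (h : Commute B Q) :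
    (B - Q) * (B + Q) = B * B - Q * Q := by
  simp only [mul_add, add_mul, sub_mul, mul_sub, h.eq]
  abel

end Hilbert

lemma bijective_of_unitary {H : Type*} [NormedAddCommGroup H] [InnerProductSpace ℂ H]
    [CompleteSpace H] {Ω : H →L[ℂ] H} (h1 : star Ω * Ω = 1) (h2 : Ω * star Ω = 1) :
    Function.Bijective Ω := by
  have h1' : ∀ x, star Ω (Ω x) = x := fun x => by
    have := DFunLike.congr_fun h1 x
    simpa [ContinuousLinearMap.mul_apply] using this
  have h2' : ∀ x, Ω (star Ω x) = x := fun x => by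
    have := DFunLike.congr_fun h2 x
    simpa [ContinuousLinearMap.mul_apply] using this
  exact ⟨fun x y hxy => by rw [← h1' x, ← h1' y, hxy], fun y => ⟨star Ω y, h2' y⟩⟩

lemma isMatRieszBasis_mk (E : ℕ → MatL2 μ s r) (hE : IsMatONB E)
    (Ω : MatL2 μ s r →L[ℂ] MatL2 μ s r)
    (hcomm : ∀ i j, Commute (opM μ s r i j) Ω)
    (h1 : star Ω * Ω = 1) (h2 : Ω * star Ω = 1) :
    IsMatRieszBasis (fun k => Ω (E k)) :=
  ⟨E, Ω, hE, bijective_of_unitary h1 h2, matAdjointable_of_comm hcomm, fun k => rfl⟩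

end AuxProof

theorem stmt_17 {G : Type*} [MeasurableSpace G] [TopologicalSpace G] [BorelSpace G]
    [AddCommGroup G] [IsTopologicalAddGroup G] [LocallyCompactSpace G]
    [SigmaCompactSpace G] [TopologicalSpace.MetrizableSpace G]
    (μ : MeasureTheory.Measure G) [μ.IsAddHaarMeasure] (s r : ℕ) (hs : 0 < s) (hr : 0 < r)
    (T Q₁ Q₂ A B : MatL2 μ s r →L[ℂ] MatL2 μ s r)
    (hTadj : MatAdjointable T)
    (hA : A = T + ContinuousLinearMap.adjoint T)
    (hB : B = T - ContinuousLinearMap.adjoint T)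
    (hA0 : A ≠ 0) (hB0 : B ≠ 0)
    (hQ1pos : Q₁.IsPositive)
    (hQ1 : Q₁ * Q₁ = ((‖A‖ : ℂ) ^ 2) • (1 : MatL2 μ s r →L[ℂ] MatL2 μ s r) - A ^ 2)
    (hQ2pos : Q₂.IsPositive)
    (hQ2 : Q₂ * Q₂ = ((‖B‖ : ℂ) ^ 2) • (1 : MatL2 μ s r →L[ℂ] MatL2 μ s r) + B ^ 2)
    (E : ℕ → MatL2 μ s r) (hE : IsMatONB E) :
    IsMatRieszBasis (fun k => ((‖A‖ : ℂ)⁻¹ • (A + Complex.I • Q₁)) (E k)) ∧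
      IsMatRieszBasis (fun k => ((‖A‖ : ℂ)⁻¹ • (A - Complex.I • Q₁)) (E k)) ∧
      IsMatRieszBasis (fun k => ((-Complex.I * (‖B‖ : ℂ)⁻¹) • (B - Q₂)) (E k)) ∧
      IsMatRieszBasis (fun k => ((-Complex.I * (‖B‖ : ℂ)⁻¹) • (B + Q₂)) (E k)) := by
    classical
  -- basic self-adjointness facts
  have hAsa : IsSelfAdjoint A := by
    rw [hA, IsSelfAdjoint, star_add, ContinuousLinearMap.star_eq_adjoint,
      ContinuousLinearMap.star_eq_adjoint, ContinuousLinearMap.adjoint_adjoint, add_comm]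
  have hBstar : star B = -B := by
    rw [hB, star_sub, ContinuousLinearMap.star_eq_adjoint, ContinuousLinearMap.star_eq_adjoint,
      ContinuousLinearMap.adjoint_adjoint, neg_sub]
  have hQ1sa : IsSelfAdjoint Q₁ := hQ1pos.isSelfAdjoint
  have hQ2sa : IsSelfAdjoint Q₂ := hQ2pos.isSelfAdjoint
  have hQ1nonneg : (0 : MatL2 μ s r →L[ℂ] MatL2 μ s r) ≤ Q₁ :=
    (ContinuousLinearMap.nonneg_iff_isPositive Q₁).2 hQ1pos
  have hQ2nonneg : (0 : MatL2 μ s r →L[ℂ] MatL2 μ s r) ≤ Q₂ :=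
    (ContinuousLinearMap.nonneg_iff_isPositive Q₂).2 hQ2pos
  -- the polynomial arguments of the square roots
  set X₁ : MatL2 μ s r →L[ℂ] MatL2 μ s r :=
    ((‖A‖ : ℂ) ^ 2) • (1 : MatL2 μ s r →L[ℂ] MatL2 μ s r) - A ^ 2 with hX₁def
  set X₂ : MatL2 μ s r →L[ℂ] MatL2 μ s r :=
    ((‖B‖ : ℂ) ^ 2) • (1 : MatL2 μ s r →L[ℂ] MatL2 μ s r) + B ^ 2 with hX₂def
  have hX₁nonneg : (0 : MatL2 μ s r →L[ℂ] MatL2 μ s r) ≤ X₁ := by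
    rw [← hQ1]
    calc (0 : MatL2 μ s r →L[ℂ] MatL2 μ s r) ≤ star Q₁ * Q₁ := star_mul_self_nonneg Q₁
      _ = Q₁ * Q₁ := by rw [hQ1sa.star_eq]
  have hX₂nonneg : (0 : MatL2 μ s r →L[ℂ] MatL2 μ s r) ≤ X₂ := by
    rw [← hQ2]
    calc (0 : MatL2 μ s r →L[ℂ] MatL2 μ s r) ≤ star Q₂ * Q₂ := star_mul_self_nonneg Q₂
      _ = Q₂ * Q₂ := by rw [hQ2sa.star_eq]
  -- commutation with the opM family
  have hTc := comm_of_matAdjointable hTadj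
  have hTsc : ∀ i j, Commute (opM μ s r i j) (ContinuousLinearMap.adjoint T) := by
    have := comm_star' hTc
    simpa [ContinuousLinearMap.star_eq_adjoint] using this
  have hAc : ∀ i j, Commute (opM μ s r i j) A := fun i j => by
    rw [hA]; exact (hTc i j).add_right (hTsc i j)
  have hBc : ∀ i j, Commute (opM μ s r i j) B := fun i j => by
    rw [hB]; exact (hTc i j).sub_right (hTsc i j)
  have hX₁c : ∀ i j, Commute (opM μ s r i j) X₁ := fun i j =>
    ((Commute.one_right _).smul_right _).sub_right ((hAc i j).pow_right 2)
  have hX₂c : ∀ i j, Commute (opM μ s r i j) X₂ := fun i j =>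
    ((Commute.one_right _).smul_right _).add_right ((hBc i j).pow_right 2)
  have hQ1c : ∀ i j, Commute (opM μ s r i j) Q₁ := fun i j =>
    commute_of_sq hX₁nonneg hQ1nonneg hQ1 (hX₁c i j) (by rw [opM_star]; exact hX₁c j i)
  have hQ2c : ∀ i j, Commute (opM μ s r i j) Q₂ := fun i j =>
    commute_of_sq hX₂nonneg hQ2nonneg hQ2 (hX₂c i j) (by rw [opM_star]; exact hX₂c j i)
  -- commutation of A with Q₁ and B with Q₂
  have hAX : Commute A X₁ :=
    ((Commute.one_right A).smul_right _).sub_right ((Commute.refl A).pow_right 2)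
  have hBX : Commute B X₂ :=
    ((Commute.one_right B).smul_right _).add_right ((Commute.refl B).pow_right 2)
  have hAQ : Commute A Q₁ :=
    commute_of_sq hX₁nonneg hQ1nonneg hQ1 hAX (by rw [hAsa.star_eq]; exact hAX)
  have hBQ : Commute B Q₂ :=
    commute_of_sq hX₂nonneg hQ2nonneg hQ2 hBX (by rw [hBstar]; exact hBX.neg_left)
  -- nonzero norms
  have hAne : (‖A‖ : ℂ) ≠ 0 := by
    simpa using (norm_ne_zero_iff.2 hA0)
  have hBne : (‖B‖ : ℂ) ≠ 0 := by
    simpa using (norm_ne_zero_iff.2 hB0)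
  -- star computations
  have hcstar : star ((‖A‖ : ℂ)⁻¹) = (‖A‖ : ℂ)⁻¹ := by
    simp [Complex.star_def, map_inv₀, Complex.conj_ofReal]
  have hS1 : star ((‖A‖ : ℂ)⁻¹ • (A + Complex.I • Q₁))
      = (‖A‖ : ℂ)⁻¹ • (A - Complex.I • Q₁) := by
    rw [star_smul, star_add, star_smul, hAsa.star_eq, hQ1sa.star_eq, hcstar]
    simp [Complex.star_def, Complex.conj_I, sub_eq_add_neg]
  have hS2 : star ((‖A‖ : ℂ)⁻¹ • (A - Complex.I • Q₁))
      = (‖A‖ : ℂ)⁻¹ • (A + Complex.I • Q₁) := by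
    rw [star_smul, star_sub, star_smul, hAsa.star_eq, hQ1sa.star_eq, hcstar]
    simp [Complex.star_def, Complex.conj_I, sub_eq_add_neg]
  have hdstar : star (-Complex.I * (‖B‖ : ℂ)⁻¹) = -(-Complex.I * (‖B‖ : ℂ)⁻¹) := by
    simp [Complex.star_def, map_inv₀, Complex.conj_ofReal, Complex.conj_I]
  have hS3 : star ((-Complex.I * (‖B‖ : ℂ)⁻¹) • (B - Q₂))
      = (-Complex.I * (‖B‖ : ℂ)⁻¹) • (B + Q₂) := by
    rw [star_smul, star_sub, hBstar, hQ2sa.star_eq, hdstar]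
    rw [neg_smul, show -B - Q₂ = -(B + Q₂) by abel, smul_neg, neg_neg]
  have hS4 : star ((-Complex.I * (‖B‖ : ℂ)⁻¹) • (B + Q₂))
      = (-Complex.I * (‖B‖ : ℂ)⁻¹) • (B - Q₂) := by
    rw [star_smul, star_add, hBstar, hQ2sa.star_eq, hdstar]
    rw [neg_smul, show -B + Q₂ = -(B - Q₂) by abel, smul_neg, neg_neg]
  -- sums of squares
  have hsumA : A * A + Q₁ * Q₁ = ((‖A‖ : ℂ) ^ 2) • (1 : MatL2 μ s r →L[ℂ] MatL2 μ s r) := by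
    rw [hQ1, hX₁def, ← pow_two]
    abel
  have hsubB : B * B - Q₂ * Q₂ = -(((‖B‖ : ℂ) ^ 2) • (1 : MatL2 μ s r →L[ℂ] MatL2 μ s r)) := by
    rw [hQ2, hX₂def, ← pow_two]
    abel
  have hscalA : (‖A‖ : ℂ)⁻¹ * (‖A‖ : ℂ)⁻¹ * (‖A‖ : ℂ) ^ 2 = 1 := by
    field_simp
  have hscalB : (-Complex.I * (‖B‖ : ℂ)⁻¹) * (-Complex.I * (‖B‖ : ℂ)⁻¹) * -((‖B‖ : ℂ) ^ 2)
      = 1 := by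
    have h2 : (-Complex.I * (‖B‖ : ℂ)⁻¹) * (-Complex.I * (‖B‖ : ℂ)⁻¹) * -((‖B‖ : ℂ) ^ 2)
        = Complex.I ^ 2 * ((‖B‖ : ℂ)⁻¹ * (‖B‖ : ℂ)⁻¹ * (‖B‖ : ℂ) ^ 2) * (-1) := by ring
    have h3 : (‖B‖ : ℂ)⁻¹ * (‖B‖ : ℂ)⁻¹ * (‖B‖ : ℂ) ^ 2 = 1 := by
      field_simp
    rw [h2, Complex.I_sq, h3]
    ring
  -- unitarity of the four operators
  have hU1a : star ((‖A‖ : ℂ)⁻¹ • (A + Complex.I • Q₁)) * ((‖A‖ : ℂ)⁻¹ • (A + Complex.I • Q₁))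
      = 1 := by
    rw [hS1, smul_mul_smul_comm, expand_e1 hAQ, hsumA, smul_smul, hscalA, one_smul]
  have hU1b : ((‖A‖ : ℂ)⁻¹ • (A + Complex.I • Q₁)) * star ((‖A‖ : ℂ)⁻¹ • (A + Complex.I • Q₁))
      = 1 := by
    rw [hS1, smul_mul_smul_comm, expand_e2 hAQ, hsumA, smul_smul, hscalA, one_smul]
  have hU2a : star ((‖A‖ : ℂ)⁻¹ • (A - Complex.I • Q₁)) * ((‖A‖ : ℂ)⁻¹ • (A - Complex.I • Q₁))
      = 1 := by
    rw [hS2, smul_mul_smul_comm, expand_e2 hAQ, hsumA, smul_smul, hscalA, one_smul]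
  have hU2b : ((‖A‖ : ℂ)⁻¹ • (A - Complex.I • Q₁)) * star ((‖A‖ : ℂ)⁻¹ • (A - Complex.I • Q₁))
      = 1 := by
    rw [hS2, smul_mul_smul_comm, expand_e1 hAQ, hsumA, smul_smul, hscalA, one_smul]
  have hU3a : star ((-Complex.I * (‖B‖ : ℂ)⁻¹) • (B - Q₂)) *
      ((-Complex.I * (‖B‖ : ℂ)⁻¹) • (B - Q₂)) = 1 := by
    rw [hS3, smul_mul_smul_comm, expand_e3 hBQ, hsubB, smul_neg, smul_smul,
      ← neg_smul, show -((-Complex.I * (‖B‖ : ℂ)⁻¹) * (-Complex.I * (‖B‖ : ℂ)⁻¹) *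
        ((‖B‖ : ℂ) ^ 2)) = (-Complex.I * (‖B‖ : ℂ)⁻¹) * (-Complex.I * (‖B‖ : ℂ)⁻¹) *
        -((‖B‖ : ℂ) ^ 2) by ring, hscalB, one_smul]
  have hU3b : ((-Complex.I * (‖B‖ : ℂ)⁻¹) • (B - Q₂)) *
      star ((-Complex.I * (‖B‖ : ℂ)⁻¹) • (B - Q₂)) = 1 := by
    rw [hS3, smul_mul_smul_comm, expand_e4 hBQ, hsubB, smul_neg, smul_smul,
      ← neg_smul, show -((-Complex.I * (‖B‖ : ℂ)⁻¹) * (-Complex.I * (‖B‖ : ℂ)⁻¹) *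
        ((‖B‖ : ℂ) ^ 2)) = (-Complex.I * (‖B‖ : ℂ)⁻¹) * (-Complex.I * (‖B‖ : ℂ)⁻¹) *
        -((‖B‖ : ℂ) ^ 2) by ring, hscalB, one_smul]
  have hU4a : star ((-Complex.I * (‖B‖ : ℂ)⁻¹) • (B + Q₂)) *
      ((-Complex.I * (‖B‖ : ℂ)⁻¹) • (B + Q₂)) = 1 := by
    rw [hS4, smul_mul_smul_comm, expand_e4 hBQ, hsubB, smul_neg, smul_smul,
      ← neg_smul, show -((-Complex.I * (‖B‖ : ℂ)⁻¹) * (-Complex.I * (‖B‖ : ℂ)⁻¹) *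
        ((‖B‖ : ℂ) ^ 2)) = (-Complex.I * (‖B‖ : ℂ)⁻¹) * (-Complex.I * (‖B‖ : ℂ)⁻¹) *
        -((‖B‖ : ℂ) ^ 2) by ring, hscalB, one_smul]
  have hU4b : ((-Complex.I * (‖B‖ : ℂ)⁻¹) • (B + Q₂)) *
      star ((-Complex.I * (‖B‖ : ℂ)⁻¹) • (B + Q₂)) = 1 := by
    rw [hS4, smul_mul_smul_comm, expand_e3 hBQ, hsubB, smul_neg, smul_smul,
      ← neg_smul, show -((-Complex.I * (‖B‖ : ℂ)⁻¹) * (-Complex.I * (‖B‖ : ℂ)⁻¹) *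
        ((‖B‖ : ℂ) ^ 2)) = (-Complex.I * (‖B‖ : ℂ)⁻¹) * (-Complex.I * (‖B‖ : ℂ)⁻¹) *
        -((‖B‖ : ℂ) ^ 2) by ring, hscalB, one_smul]
  -- commutation of the four operators with the opM family
  have hc1 : ∀ i j, Commute (opM μ s r i j) ((‖A‖ : ℂ)⁻¹ • (A + Complex.I • Q₁)) := fun i j =>
    ((hAc i j).add_right ((hQ1c i j).smul_right _)).smul_right _
  have hc2 : ∀ i j, Commute (opM μ s r i j) ((‖A‖ : ℂ)⁻¹ • (A - Complex.I • Q₁)) := fun i j =>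
    ((hAc i j).sub_right ((hQ1c i j).smul_right _)).smul_right _
  have hc3 : ∀ i j, Commute (opM μ s r i j) ((-Complex.I * (‖B‖ : ℂ)⁻¹) • (B - Q₂)) :=
    fun i j => ((hBc i j).sub_right (hQ2c i j)).smul_right _
  have hc4 : ∀ i j, Commute (opM μ s r i j) ((-Complex.I * (‖B‖ : ℂ)⁻¹) • (B + Q₂)) :=
    fun i j => ((hBc i j).add_right (hQ2c i j)).smul_right _
  exact ⟨isMatRieszBasis_mk E hE _ hc1 hU1a hU1b,
    isMatRieszBasis_mk E hE _ hc2 hU2a hU2b,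
    isMatRieszBasis_mk E hE _ hc3 hU3a hU3b,
    isMatRieszBasis_mk E hE _ hc4 hU4a hU4b⟩
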